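/- Under the same hypotheses, for each fixed s ∈ [a+1, b] the function t ↦ u(t,s) is nondecreasing in t on [a, s-1], i.e., u(t,s) - u(t-1,s) ≥ 0 for a+1 ≤ t ≤ s-1, with strict increase when α > 0 and (γ > 0 or δ > 0). -/
import Mathlib


noncomputable def H (μ : ℝ) (t a : ℤ) : ℝ :=
  Real.Gamma ((t : ℝ) - a + μ) / (Real.Gamma ((t : ℝ) - a) * Real.Gamma (μ + 1))

noncomputable def xiBVP (ν : ℝ) (a b : ℤ) (α β γ δ : ℝ) : ℝ :=
  (β - α) * γ + α * γ * H (ν - 1) b a + α * δ * H (ν - 2) b a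

noncomputable def uG (ν : ℝ) (a b : ℤ) (α β γ δ : ℝ) (t s : ℤ) : ℝ :=
  (1 / xiBVP ν a b α β γ δ) *
    (α * γ * H (ν - 1) t a * H (ν - 1) b (s - 1)
      + α * δ * H (ν - 1) t a * H (ν - 2) b (s - 1)
      + (β - α) * γ * H (ν - 1) b (s - 1)
      + (β - α) * δ * H (ν - 2) b (s - 1))

noncomputable def vG (ν : ℝ) (a b : ℤ) (α β γ δ : ℝ) (t s : ℤ) : ℝ :=
  uG ν a b α β γ δ t s - H (ν - 1) t (s - 1)

noncomputable def GG (ν : ℝ) (a b : ℤ) (α β γ δ : ℝ) (t s : ℤ) : ℝ :=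
  if t ≤ s - 1 then uG ν a b α β γ δ t s else vG ν a b α β γ δ t s

lemma Hpos (μ : ℝ) (t a : ℤ) (h : a + 1 ≤ t) (hμ : 0 < (t : ℝ) - a + μ)
    (hμ1 : 0 < μ + 1) : 0 < H μ t a := by
  have hx : (1 : ℝ) ≤ (t : ℝ) - a := by
    have : (a : ℝ) + 1 ≤ t := by exact_mod_cast h
    linarith
  unfold H
  exact div_pos (Real.Gamma_pos_of_pos hμ)
    (mul_pos (Real.Gamma_pos_of_pos (by linarith)) (Real.Gamma_pos_of_pos hμ1))

lemma Hdiff (ν : ℝ) (hν1 : 1 < ν) (a t : ℤ) (h : a + 1 ≤ t) :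
    H (ν - 1) t a - H (ν - 1) (t - 1) a = H (ν - 2) t a := by
  rcases eq_or_lt_of_le h with heq | hlt
  · -- t = a + 1
    subst heq
    unfold H
    push_cast
    have h1 : (a : ℝ) + 1 - a = 1 := by ring
    have h0 : (a : ℝ) + 1 - 1 - a = 0 := by ring
    rw [h1, h0]
    simp only [Real.Gamma_zero, Real.Gamma_one, mul_zero, zero_mul, div_zero, sub_zero,
      one_mul, mul_one]
    rw [show (1 : ℝ) + (ν - 1) = ν by ring, show (1 : ℝ) + (ν - 2) = ν - 1 by ring,
      show ν - 2 + 1 = ν - 1 by ring, show ν - 1 + 1 = ν by ring]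
    have hg : Real.Gamma ν ≠ 0 := (Real.Gamma_pos_of_pos (by linarith)).ne'
    have hg1 : Real.Gamma (ν - 1) ≠ 0 := (Real.Gamma_pos_of_pos (by linarith)).ne'
    rw [div_self hg, div_self hg1]
  · -- t ≥ a + 2
    have hx : (2 : ℝ) ≤ (t : ℝ) - a := by
      have : (a : ℝ) + 2 ≤ t := by exact_mod_cast (by omega : a + 2 ≤ t)
      linarith
    unfold H
    set X : ℝ := (t : ℝ) - a with hX
    have hX1 : ((t - 1 : ℤ) : ℝ) - a = X - 1 := by push_cast; ring
    rw [hX1]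
    have e1 : Real.Gamma (X + (ν - 1)) = (X + ν - 2) * Real.Gamma (X + ν - 2) := by
      rw [show X + (ν - 1) = (X + ν - 2) + 1 by ring, Real.Gamma_add_one (by nlinarith)]
    have e2 : Real.Gamma X = (X - 1) * Real.Gamma (X - 1) := by
      have h' := Real.Gamma_add_one (show X - 1 ≠ 0 by nlinarith)
      rw [show X - 1 + 1 = X by ring] at h'
      exact h'
    have e3 : Real.Gamma (ν - 1 + 1) = (ν - 1) * Real.Gamma (ν - 1) := by
      rw [Real.Gamma_add_one (by linarith)]
    have e4 : X - 1 + (ν - 1) = X + ν - 2 := by ring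
    have e5 : ν - 2 + 1 = ν - 1 := by ring
    have e6 : X + (ν - 2) = X + ν - 2 := by ring
    rw [e1, e2, e3, e4, e5, e6]
    have hg1 : Real.Gamma (X - 1) ≠ 0 := (Real.Gamma_pos_of_pos (by linarith)).ne'
    have hg2 : Real.Gamma (ν - 1) ≠ 0 := (Real.Gamma_pos_of_pos (by linarith)).ne'
    have hn1 : X - 1 ≠ 0 := by nlinarith
    have hn2 : ν - 1 ≠ 0 := by intro h'; linarith [sub_eq_zero.mp h']
    field_simp
    ring

theorem u_monotone (ν : ℝ) (hν1 : 1 < ν) (hν2 : ν < 2) (a b : ℤ) (hab : a + 1 ≤ b)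
    (α β γ δ : ℝ) (hα : 0 ≤ α) (hβ : 0 ≤ β) (hγ : 0 ≤ γ) (hδ : 0 ≤ δ)
    (hba : α ≤ β) (hξ : 0 < xiBVP ν a b α β γ δ)
    (s : ℤ) (hsa : a + 1 ≤ s) (hsb : s ≤ b)
    (t : ℤ) (hta : a + 1 ≤ t) (hts : t ≤ s - 1) :
    0 ≤ uG ν a b α β γ δ t s - uG ν a b α β γ δ (t - 1) s ∧
    (0 < α → (0 < γ ∨ 0 < δ) →
      0 < uG ν a b α β γ δ t s - uG ν a b α β γ δ (t - 1) s) := by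
  have hd := Hdiff ν hν1 a t hta
  have key : uG ν a b α β γ δ t s - uG ν a b α β γ δ (t - 1) s =
      (1 / xiBVP ν a b α β γ δ) *
        (α * H (ν - 2) t a *
          (γ * H (ν - 1) b (s - 1) + δ * H (ν - 2) b (s - 1))) := by
    unfold uG
    have h' : H (ν - 1) t a = H (ν - 1) (t - 1) a + H (ν - 2) t a := by linarith
    rw [h']; ring
  have hxt : (1 : ℝ) ≤ (t : ℝ) - a := by
    have : (a : ℝ) + 1 ≤ t := by exact_mod_cast hta
    linarith
  have hxb : (1 : ℝ) ≤ (b : ℝ) - (s - 1 : ℤ) := by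
    have : (s : ℝ) ≤ b := by exact_mod_cast hsb
    push_cast; linarith
  have hP : 0 < H (ν - 2) t a :=
    Hpos _ _ _ hta (by linarith) (by linarith)
  have hQ : 0 < H (ν - 1) b (s - 1) :=
    Hpos _ _ _ (by omega) (by linarith) (by linarith)
  have hR : 0 < H (ν - 2) b (s - 1) :=
    Hpos _ _ _ (by omega) (by linarith) (by linarith)
  constructor
  · rw [key]
    have : 0 ≤ γ * H (ν - 1) b (s - 1) + δ * H (ν - 2) b (s - 1) := by positivity
    positivity
  · intro hα' hgd
    rw [key]
    have hsum : 0 < γ * H (ν - 1) b (s - 1) + δ * H (ν - 2) b (s - 1) := by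
      rcases hgd with hg | hd'
      · exact add_pos_of_pos_of_nonneg (mul_pos hg hQ) (by positivity)
      · exact add_pos_of_nonneg_of_pos (by positivity) (mul_pos hd' hR)
    positivity
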